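/- arXiv:1701.03699 — 5 statements merged into one kernel-verified Lean document; each statement's English description precedes it below -/
import Mathlib

section
/- Let A be an irreducible nonnegative integer k×k matrix satisfying A² = nA for some positive integer n. Then A has rank 1, trace n, and there exist vectors v, w ∈ ℤ^k with all entries strictly positive such that A = v wᵀ. -/
/-- Irreducibility of a nonnegative square integer matrix. -/
def Matrix.IsIrreducibleInt {k : ℕ} (A : Matrix (Fin k) (Fin k) ℤ) : Prop :=
  ∀ i j, ∃ m : ℕ, 1 ≤ m ∧ 0 < (A ^ m) i j

/-- an irreducible nonnegative integer `k × k` matrix with `A² = nA` (for a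
positive integer `n`) has rank 1, trace `n`, and factors as `A = v wᵀ` with `v, w` strictly
positive integer vectors. -/
theorem quasi_idempotent_factorization {k n : ℕ} (hk : 0 < k) (hn : 0 < n)
    (A : Matrix (Fin k) (Fin k) ℤ) (hA0 : ∀ i j, 0 ≤ A i j) (hirr : A.IsIrreducibleInt)
    (hA : A ^ 2 = (n : ℤ) • A) :
    (A.map (Int.cast : ℤ → ℚ)).rank = 1 ∧ A.trace = (n : ℤ) ∧
      ∃ v w : Fin k → ℤ, (∀ i, 0 < v i) ∧ (∀ i, 0 < w i) ∧ A = Matrix.vecMulVec v w := by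
  have : NeZero k := ⟨hk.ne'⟩
  set i0 : Fin k := ⟨0, hk⟩ with hi0
  -- Powers of A are multiples of A
  have haux : ∀ m : ℕ, A ^ (m + 1) = ((n : ℤ) ^ m) • A := by
    intro m
    induction m with
    | zero => simp
    | succ m ih =>
      rw [pow_succ, ih, Matrix.smul_mul, show A * A = A ^ 2 from (pow_two A).symm, hA,
        smul_smul, pow_succ]
  -- A has strictly positive entries
  have hpos : ∀ i j, 0 < A i j := by
    intro i j
    obtain ⟨m, hm1, hm⟩ := hirr i j
    obtain ⟨m, rfl⟩ := Nat.exists_eq_add_of_le hm1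
    rw [show 1 + m = m + 1 from Nat.add_comm 1 m, haux m, Matrix.smul_apply, smul_eq_mul] at hm
    rcases (hA0 i j).lt_or_eq with h | h
    · exact h
    · rw [← h, mul_zero] at hm; exact absurd hm (lt_irrefl 0)
  -- Entrywise form of A² = nA
  have hsq : ∀ i j, (n : ℤ) * A i j = ∑ l, A i l * A l j := by
    intro i j
    have := congrFun (congrFun hA i) j
    rw [pow_two, Matrix.mul_apply, Matrix.smul_apply, smul_eq_mul] at this
    exact this.symm
  -- Row proportionality
  have hrow : ∀ i j, A i j * A i0 i0 = A i i0 * A i0 j := by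
    intro i j
    obtain ⟨j0, -, hj0⟩ := Finset.exists_min_image Finset.univ
      (fun j => (A i j : ℚ) / (A i0 j : ℚ)) Finset.univ_nonempty
    have hkey : ∀ l, A i j0 * A i0 l ≤ A i l * A i0 j0 := by
      intro l
      have h := hj0 l (Finset.mem_univ l)
      rw [div_le_div_iff₀ (by exact_mod_cast hpos i0 j0) (by exact_mod_cast hpos i0 l)] at h
      exact_mod_cast h
    set d : Fin k → ℤ := fun l => A i l * A i0 j0 - A i j0 * A i0 l with hd
    have hd0 : ∀ l, 0 ≤ d l := fun l => sub_nonneg.2 (hkey l)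
    have hsum : ∑ l, d l * A l j0 = 0 := by
      have e : ∑ l, d l * A l j0 =
          (∑ l, A i l * A l j0) * A i0 j0 - A i j0 * (∑ l, A i0 l * A l j0) := by
        rw [Finset.sum_mul, Finset.mul_sum, ← Finset.sum_sub_distrib]
        exact Finset.sum_congr rfl fun l _ => by simp only [hd]; ring
      rw [e, ← hsq i j0, ← hsq i0 j0]; ring
    have hz : ∀ l, d l = 0 := by
      intro l
      have h0 := (Finset.sum_eq_zero_iff_of_nonneg
        (fun l _ => mul_nonneg (hd0 l) (hpos l j0).le)).1 hsum l (Finset.mem_univ l)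
      exact (mul_eq_zero.1 h0).resolve_right (hpos l j0).ne'
    have h1 := sub_eq_zero.1 (hz j)
    have h2 := sub_eq_zero.1 (hz i0)
    apply mul_left_cancel₀ (hpos i0 j0).ne'
    linear_combination A i0 i0 * h1 - A i0 j * h2
  -- gcd of the first row
  set g : ℤ := Finset.univ.gcd (fun j => A i0 j) with hg
  have hgdvd : ∀ j, g ∣ A i0 j := fun j => Finset.gcd_dvd (Finset.mem_univ j)
  have hgne : g ≠ 0 := by
    intro h
    have := Finset.gcd_eq_zero_iff.1 (hg ▸ h) i0 (Finset.mem_univ i0)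
    exact (hpos i0 i0).ne' this
  have hgnn : 0 ≤ g := by
    have := Finset.normalize_gcd (s := (Finset.univ : Finset (Fin k))) (f := fun j => A i0 j)
    exact Int.nonneg_of_normalize_eq_self (hg ▸ this)
  have hgpos : 0 < g := lt_of_le_of_ne hgnn (Ne.symm hgne)
  set w : Fin k → ℤ := fun j => A i0 j / g with hwdef
  have hw : ∀ j, g * w j = A i0 j := fun j => Int.mul_ediv_cancel' (hgdvd j)
  have hwpos : ∀ j, 0 < w j := by
    intro j
    by_contra h
    push_neg at h
    have : g * w j ≤ 0 := mul_nonpos_of_nonneg_of_nonpos hgnn h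
    rw [hw j] at this
    exact absurd (hpos i0 j) (not_lt.2 this)
  -- A i0 i0 divides A i i0 * g
  have hvdvd : ∀ i, A i0 i0 ∣ A i i0 * g := by
    intro i
    have h1 : A i0 i0 ∣ Finset.univ.gcd (fun j => A i i0 * A i0 j) :=
      Finset.dvd_gcd fun j _ => ⟨A i j, by rw [← hrow i j]; ring⟩
    rwa [Finset.gcd_mul_left, Int.normalize_of_nonneg (hpos i i0).le] at h1
  set v : Fin k → ℤ := fun i => A i i0 * g / A i0 i0 with hvdef
  have hv : ∀ i, A i0 i0 * v i = A i i0 * g := fun i => Int.mul_ediv_cancel' (hvdvd i)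
  have hvpos : ∀ i, 0 < v i := by
    intro i
    by_contra h
    push_neg at h
    have h2 : A i0 i0 * v i ≤ 0 := mul_nonpos_of_nonneg_of_nonpos (hpos i0 i0).le h
    rw [hv i] at h2
    nlinarith [hpos i i0, hgpos]
  -- Factorization
  have hfact : A = Matrix.vecMulVec v w := by
    ext i j
    rw [Matrix.vecMulVec_apply]
    have hne : A i0 i0 * g ≠ 0 := mul_ne_zero (hpos i0 i0).ne' hgne
    apply mul_right_cancel₀ hne
    calc A i j * (A i0 i0 * g) = (A i j * A i0 i0) * g := by ring
      _ = (A i i0 * A i0 j) * g := by rw [hrow i j]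
      _ = (A i i0 * g) * A i0 j := by ring
      _ = (A i0 i0 * v i) * (g * w j) := by rw [hv i, hw j]
      _ = v i * w j * (A i0 i0 * g) := by ring
  -- Trace
  have htr : A.trace = (n : ℤ) := by
    apply mul_right_cancel₀ (hpos i0 i0).ne'
    have e : ∑ l, A i0 l * A l i0 = ∑ l, A l l * A i0 i0 :=
      Finset.sum_congr rfl fun l _ => by rw [hrow l l]; ring
    have := hsq i0 i0
    rw [e, ← Finset.sum_mul] at this
    simp only [Matrix.trace, Matrix.diag]
    exact this.symm
  refine ⟨?_, htr, v, w, hvpos, hwpos, hfact⟩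
  -- Rank
  set B : Matrix (Fin k) (Fin k) ℚ := A.map (Int.cast : ℤ → ℚ) with hB
  have hBfact : B = Matrix.vecMulVec (fun i => (v i : ℚ)) (fun j => (w j : ℚ)) := by
    ext i j
    simp [hB, Matrix.map_apply, hfact, Matrix.vecMulVec_apply]
  have hle : B.rank ≤ 1 := by
    rw [hBfact, Matrix.vecMulVec_eq Unit]
    calc (Matrix.replicateCol Unit (fun i => (v i : ℚ)) * Matrix.replicateRow Unit (fun j => (w j : ℚ))).rank
        ≤ (Matrix.replicateCol Unit (fun i => (v i : ℚ))).rank := Matrix.rank_mul_le_left _ _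
      _ ≤ Fintype.card Unit := Matrix.rank_le_card_width _
      _ = 1 := Fintype.card_unit
  have hge : 0 < B.rank := by
    rw [Matrix.rank]
    rw [Module.finrank_pos_iff_exists_ne_zero]
    refine ⟨⟨B.mulVec (fun _ => 1), ⟨fun _ => 1, rfl⟩⟩, ?_⟩
    intro hzero
    have h0 : B.mulVec (fun _ => 1) = 0 := congrArg Subtype.val hzero
    have h1 := congrFun h0 i0
    rw [Matrix.mulVec, dotProduct] at h1
    have hpos' : (0 : ℚ) < ∑ j, B i0 j * 1 := by
      apply Finset.sum_pos _ Finset.univ_nonempty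
      intro j _
      simp only [hB, Matrix.map_apply, mul_one]
      exact_mod_cast hpos i0 j
    rw [h1] at hpos'
    exact lt_irrefl 0 hpos'
  omega
end

section
/- For any positive integer n, the set of irreducible nonnegative integer square matrices A (of any size) with A² = nA is finite. -/
lemma bounded_matrices_finite (k : ℕ) (B : ℤ) :
    ({M : Matrix (Fin k) (Fin k) ℤ | ∀ i j, 0 ≤ M i j ∧ M i j ≤ B}).Finite := by
  have h := Set.Finite.pi (fun i : Fin k => Set.Finite.pi fun j : Fin k =>
    Set.finite_Icc (0 : ℤ) B)
  refine h.subset ?_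
  intro M hM
  simp only [Set.mem_pi, Set.mem_univ, forall_true_left, Set.mem_Icc]
  exact fun i j => hM i j

/-- for any positive integer `n`, the set of irreducible nonnegative integer
square matrices (of any size `k ≥ 1`) satisfying `A² = nA` is finite. -/
theorem finite_quasi_idempotent (n : ℕ) (hn : 0 < n) :
    {A : Σ k : ℕ, Matrix (Fin k) (Fin k) ℤ |
        1 ≤ A.1 ∧ (∀ i j, 0 ≤ A.2 i j) ∧ A.2.IsIrreducibleInt ∧
          A.2 ^ 2 = (n : ℤ) • A.2}.Finite := by
  apply Set.Finite.subset (Set.Finite.biUnion (Set.finite_Icc 0 (n ^ 2))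
    (fun k _ => (bounded_matrices_finite k ((n : ℤ) ^ 2)).image (Sigma.mk k)))
  rintro ⟨k, A⟩ ⟨hk, hnn, hirr, hA2⟩
  have hn' : (0 : ℤ) < n := by exact_mod_cast hn
  have hpow : ∀ m : ℕ, A ^ (m + 1) = ((n : ℤ) ^ m) • A := by
    intro m
    induction m with
    | zero => simp
    | succ m ih =>
      rw [pow_succ, ih, Matrix.smul_mul, ← pow_two, hA2, smul_smul, ← pow_succ]
  have hpos : ∀ i j, 0 < A i j := by
    intro i j
    obtain ⟨m, hm, h⟩ := hirr i j
    obtain ⟨m', rfl⟩ : ∃ m', m = m' + 1 := ⟨m - 1, by omega⟩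
    rw [hpow m'] at h
    have hp : (0 : ℤ) < (n : ℤ) ^ m' := pow_pos hn' m'
    simp only [Matrix.smul_apply, smul_eq_mul] at h
    nlinarith
  have hsum : ∀ i j : Fin k, (n : ℤ) * A i j = ∑ l, A i l * A l j := by
    intro i j
    have h := (Matrix.ext_iff.mpr hA2) i j
    rw [pow_two, Matrix.mul_apply, Matrix.smul_apply, smul_eq_mul] at h
    linarith [h]
  have hdiag : ∀ i, A i i ≤ (n : ℤ) := by
    intro i
    have h1 := hsum i i
    have h2 : A i i * A i i ≤ ∑ l, A i l * A l i :=
      Finset.single_le_sum (fun l _ => mul_nonneg (hpos i l).le (hpos l i).le)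
        (Finset.mem_univ i)
    nlinarith [hpos i i]
  have hbound : ∀ i j, A i j ≤ (n : ℤ) ^ 2 := by
    intro i j
    have h1 := hsum i i
    have h2 : A i j * A j i ≤ ∑ l, A i l * A l i :=
      Finset.single_le_sum (fun l _ => mul_nonneg (hpos i l).le (hpos l i).le)
        (Finset.mem_univ j)
    have h3 : 1 ≤ A j i := hpos j i
    have h4 := hdiag i
    nlinarith [hpos i j]
  have i0 : Fin k := ⟨0, hk⟩
  have hkb : k ≤ n ^ 2 := by
    have h1 := hsum i0 i0
    have h2 : (k : ℤ) ≤ ∑ l, A i0 l * A l i0 := by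
      calc (k : ℤ) = ∑ _l : Fin k, (1 : ℤ) := by simp
        _ ≤ _ := Finset.sum_le_sum (fun l _ => by
            have := hpos i0 l; have := hpos l i0; nlinarith)
    have h4 := hdiag i0
    have h5 : (k : ℤ) ≤ (n : ℤ) ^ 2 := by nlinarith [hpos i0 i0]
    exact_mod_cast h5
  refine Set.mem_biUnion (Set.mem_Icc.mpr ⟨Nat.zero_le _, hkb⟩) ?_
  exact ⟨A, fun i j => ⟨(hpos i j).le, hbound i j⟩, rfl⟩
end

section
/- If A is an irreducible nonnegative integer k×k matrix with A² = nA for a positive integer n, then k ≤ n. -/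
/-- Irreducibility of a nonnegative square integer matrix. -/
def Matrix.IsIrreducible' {k : ℕ} (A : Matrix (Fin k) (Fin k) ℤ) : Prop :=
  ∀ i j, ∃ m : ℕ, 1 ≤ m ∧ 0 < (A ^ m) i j

/-- if `A` is an irreducible nonnegative integer `k × k` matrix with `A² = nA`
for a positive integer `n`, then `k ≤ n`. -/
theorem quasi_idempotent_size_bound {k n : ℕ} (hn : 0 < n)
    (A : Matrix (Fin k) (Fin k) ℤ) (hA0 : ∀ i j, 0 ≤ A i j) (hirr : A.IsIrreducible')
    (hA : A ^ 2 = (n : ℤ) • A) : k ≤ n := by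
  rcases Nat.eq_zero_or_pos k with hk | hk
  · exact hk ▸ Nat.zero_le n
  have hpow : ∀ m : ℕ, A ^ (m + 1) = ((n : ℤ) ^ m) • A := by
    intro m
    induction m with
    | zero => simp
    | succ m ih =>
      rw [pow_succ, ih, smul_mul_assoc, ← pow_two, hA, smul_smul, pow_succ]
  have hpos : ∀ i j, 0 < A i j := by
    intro i j
    obtain ⟨m, hm1, hm⟩ := hirr i j
    obtain ⟨m', rfl⟩ := Nat.exists_eq_add_of_le hm1
    rw [Nat.add_comm, hpow] at hm
    simp only [Matrix.smul_apply, smul_eq_mul] at hm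
    have hnp : (0 : ℤ) < (n : ℤ) ^ m' := pow_pos (by exact_mod_cast hn) m'
    by_contra hcon
    push_neg at hcon
    have : A i j = 0 := le_antisymm hcon (hA0 i j)
    simp [this] at hm
  set j0 : Fin k := ⟨0, hk⟩
  obtain ⟨i0, _, hmin⟩ := Finset.exists_min_image Finset.univ (fun i => A i j0)
    ⟨j0, Finset.mem_univ _⟩
  have hsum : (A ^ 2) i0 j0 = ∑ l, A i0 l * A l j0 := by
    rw [pow_two, Matrix.mul_apply]
  have hrhs : (A ^ 2) i0 j0 = (n : ℤ) * A i0 j0 := by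
    rw [hA]; simp
  have hlb : (k : ℤ) * A i0 j0 ≤ ∑ l, A i0 l * A l j0 := by
    have : (k : ℤ) * A i0 j0 = ∑ _l : Fin k, A i0 j0 := by
      simp [mul_comm]
    rw [this]
    apply Finset.sum_le_sum
    intro l _
    calc A i0 j0 ≤ A l j0 := hmin l (Finset.mem_univ l)
      _ = 1 * A l j0 := (one_mul _).symm
      _ ≤ A i0 l * A l j0 := by
        apply mul_le_mul_of_nonneg_right _ (hA0 l j0)
        exact hpos i0 l
  have : (k : ℤ) * A i0 j0 ≤ (n : ℤ) * A i0 j0 := by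
    calc (k : ℤ) * A i0 j0 ≤ ∑ l, A i0 l * A l j0 := hlb
      _ = (n : ℤ) * A i0 j0 := by rw [← hsum, hrhs]
  have hAp := hpos i0 j0
  have : (k : ℤ) ≤ n := by nlinarith
  exact_mod_cast this
end

section
/- The map sending a pair (v, w) of strictly positive integer vectors of length k with Σ_{i=1}^k v_i w_i = n and gcd(v_1, …, v_k) = 1 to the matrix v wᵀ is a bijection onto the set of irreducible nonnegative integer k×k matrices A satisfying A² = nA. -/
/-- Two positive eigenvectors of a positive matrix (same eigenvalue) are proportional. -/
lemma eigen_proportional {k : ℕ} (A : Matrix (Fin k) (Fin k) ℤ) (n : ℤ)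
    (hApos : ∀ i j, 0 < A i j) (x y : Fin k → ℤ) (hx : ∀ i, 0 < x i) (hy : ∀ i, 0 < y i)
    (hxe : ∀ i, ∑ l, A i l * x l = n * x i) (hye : ∀ i, ∑ l, A i l * y l = n * y i) :
    ∀ i i', x i * y i' = x i' * y i := by
  intro i i'
  obtain ⟨i0, -, hmin⟩ := Finset.exists_min_image Finset.univ
    (fun l => (y l : ℚ) / (x l : ℚ)) ⟨i, Finset.mem_univ i⟩
  have key : ∀ l, y i0 * x l ≤ y l * x i0 := by
    intro l
    have h1 := hmin l (Finset.mem_univ l)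
    have hx0 : (0 : ℚ) < (x i0 : ℚ) := by exact_mod_cast hx i0
    have hxl : (0 : ℚ) < (x l : ℚ) := by exact_mod_cast hx l
    rw [div_le_div_iff₀ hx0 hxl] at h1
    exact_mod_cast h1
  -- z l := x i0 * y l - y i0 * x l is nonneg and sums against A i0 to zero
  have hz0 : ∀ l, x i0 * y l - y i0 * x l = 0 := by
    have hsum : ∑ l, A i0 l * (x i0 * y l - y i0 * x l) = 0 := by
      have e1 := hxe i0
      have e2 := hye i0
      have : ∑ l, A i0 l * (x i0 * y l - y i0 * x l)
          = x i0 * (∑ l, A i0 l * y l) - y i0 * (∑ l, A i0 l * x l) := by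
        rw [Finset.mul_sum, Finset.mul_sum, ← Finset.sum_sub_distrib]
        apply Finset.sum_congr rfl
        intro l _
        ring
      rw [this, e1, e2]; ring
    have hterm : ∀ l ∈ Finset.univ, (0:ℤ) ≤ A i0 l * (x i0 * y l - y i0 * x l) := by
      intro l _
      have := key l
      have := (hApos i0 l).le
      nlinarith
    intro l
    have := (Finset.sum_eq_zero_iff_of_nonneg hterm).1 hsum l (Finset.mem_univ l)
    have hA := hApos i0 l
    nlinarith [key l]
  have h1 : x i0 * y i = y i0 * x i := by have := hz0 i; linarith
  have h2 : x i0 * y i' = y i0 * x i' := by have := hz0 i'; linarith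
  have hx0 : x i0 ≠ 0 := (hx i0).ne'
  apply mul_left_cancel₀ hx0
  linear_combination x i * h2 - x i' * h1

/-- for fixed positive integers `n` and `k`, the map `(v, w) ↦ v wᵀ` is a
bijection from the set of pairs of strictly positive integer vectors of length `k` with
`∑ i, v i * w i = n` and `gcd (v 1, …, v k) = 1` onto the set of irreducible nonnegative
integer `k × k` matrices `A` with `A² = nA`. -/
theorem outer_product_bijection {n k : ℕ} (hn : 0 < n) (hk : 0 < k) :
    Set.BijOn (fun p : (Fin k → ℤ) × (Fin k → ℤ) => Matrix.vecMulVec p.1 p.2)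
      {p | (∀ i, 0 < p.1 i) ∧ (∀ i, 0 < p.2 i) ∧ (∑ i, p.1 i * p.2 i) = (n : ℤ) ∧
        Finset.univ.gcd p.1 = 1}
      {A : Matrix (Fin k) (Fin k) ℤ |
        (∀ i j, 0 ≤ A i j) ∧ A.IsIrreducibleInt ∧ A ^ 2 = (n : ℤ) • A} := by
  have i0 : Fin k := ⟨0, hk⟩
  constructor
  · -- MapsTo
    rintro ⟨v, w⟩ ⟨hv, hw, hsum, -⟩
    refine ⟨fun i j => (mul_pos (hv i) (hw j)).le, fun i j => ⟨1, le_refl 1, ?_⟩, ?_⟩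
    · simpa [Matrix.vecMulVec_apply] using mul_pos (hv i) (hw j)
    · ext i j
      simp only [pow_two, Matrix.mul_apply, Matrix.vecMulVec_apply, Matrix.smul_apply,
        smul_eq_mul]
      calc ∑ l, v i * w l * (v l * w j) = ∑ l, v i * w j * (v l * w l) := by
            apply Finset.sum_congr rfl; intro l _; ring
        _ = v i * w j * ∑ l, v l * w l := by rw [Finset.mul_sum]
        _ = (n : ℤ) * (v i * w j) := by rw [hsum]; ring
  constructor
  · -- InjOn
    rintro ⟨v, w⟩ ⟨hv, hw, -, hg⟩ ⟨v', w'⟩ ⟨hv', hw', -, hg'⟩ heq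
    simp only at heq
    have hent : ∀ i j, v i * w j = v' i * w' j := by
      intro i j
      have := congrFun (congrFun heq i) j
      simpa [Matrix.vecMulVec_apply] using this
    have hw_eq : ∀ j, w j = w' j := by
      intro j
      have h1 : Finset.univ.gcd (fun i => v i * w j) = Finset.univ.gcd (fun i => v' i * w' j) := by
        apply Finset.gcd_congr rfl
        intro i _; exact hent i j
      rw [Finset.gcd_mul_right, Finset.gcd_mul_right, hg, hg',
        Int.normalize_of_nonneg (hw j).le, Int.normalize_of_nonneg (hw' j).le] at h1
      simpa using h1
    have hv_eq : ∀ i, v i = v' i := by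
      intro i
      have := hent i i0
      rw [hw_eq i0] at this
      exact mul_right_cancel₀ (hw' i0).ne' this
    exact Prod.ext (funext hv_eq) (funext hw_eq)
  · -- SurjOn
    rintro A ⟨hA0, hAirr, hA2⟩
    -- All entries are positive
    have hpow : ∀ m : ℕ, A ^ (m + 1) = ((n : ℤ) ^ m) • A := by
      intro m
      induction m with
      | zero => simp
      | succ m ih =>
        rw [pow_succ, ih, Matrix.smul_mul, ← pow_two, hA2, smul_smul, ← pow_succ]
    have hApos : ∀ i j, 0 < A i j := by
      intro i j
      obtain ⟨m, hm1, hmpos⟩ := hAirr i j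
      obtain ⟨m', rfl⟩ := Nat.exists_eq_add_of_le hm1
      rw [add_comm, hpow m'] at hmpos
      simp only [Matrix.smul_apply, smul_eq_mul] at hmpos
      have hnp : (0:ℤ) < (n:ℤ) ^ m' := pow_pos (by exact_mod_cast hn) m'
      nlinarith
    -- eigen equations for columns
    have hcol : ∀ j i, ∑ l, A i l * A l j = (n : ℤ) * A i j := by
      intro j i
      have := congrFun (congrFun hA2 i) j
      simpa [pow_two, Matrix.mul_apply] using this
    -- rank one relation
    have hrank : ∀ i j, A i i0 * A i0 j = A i0 i0 * A i j := by
      intro i j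
      exact eigen_proportional A (n:ℤ) hApos (fun i => A i i0) (fun i => A i j)
        (fun i => hApos i i0) (fun i => hApos i j) (hcol i0) (hcol j) i i0
    set g : ℤ := Finset.univ.gcd (fun i => A i i0) with hgdef
    have hgdvd : ∀ i, g ∣ A i i0 := fun i => Finset.gcd_dvd (Finset.mem_univ i)
    have hgpos : 0 < g := by
      have h1 : 0 ≤ g := by
        rw [hgdef, ← Finset.normalize_gcd, ← Int.abs_eq_normalize]
        exact abs_nonneg _
      rcases h1.lt_or_eq with h | h
      · exact h
      · exfalso
        have := hgdvd i0
        rw [← h] at this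
        simp only [zero_dvd_iff] at this
        exact (hApos i0 i0).ne' this
    have hdvdw : ∀ j, A i0 i0 ∣ g * A i0 j := by
      intro j
      have : A i0 i0 ∣ Finset.univ.gcd (fun i => A i i0 * A i0 j) := by
        apply Finset.dvd_gcd
        intro i _
        exact ⟨A i j, hrank i j⟩
      rwa [Finset.gcd_mul_right, ← hgdef, Int.normalize_of_nonneg (hApos i0 j).le] at this
    set v : Fin k → ℤ := fun i => A i i0 / g with hvdef
    set w : Fin k → ℤ := fun j => g * A i0 j / A i0 i0 with hwdef
    have hv : ∀ i, g * v i = A i i0 := fun i => Int.mul_ediv_cancel' (hgdvd i)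
    have hw : ∀ j, A i0 i0 * w j = g * A i0 j := fun j => Int.mul_ediv_cancel' (hdvdw j)
    have hvpos : ∀ i, 0 < v i := by
      intro i
      have h1 := hv i
      have h2 := hApos i i0
      nlinarith
    have hwpos : ∀ j, 0 < w j := by
      intro j
      have h1 := hw j
      have h2 := hApos i0 j
      have h3 := hApos i0 i0
      have h4 := mul_pos hgpos h2
      nlinarith
    have hne : g * A i0 i0 ≠ 0 := (mul_pos hgpos (hApos i0 i0)).ne'
    have hentry : ∀ i j, v i * w j = A i j := by
      intro i j
      apply mul_left_cancel₀ hne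
      have : g * A i0 i0 * (v i * w j) = (g * v i) * (A i0 i0 * w j) := by ring
      rw [this, hv i, hw j]
      linear_combination g * hrank i j
    refine ⟨(v, w), ⟨hvpos, hwpos, ?_, ?_⟩, ?_⟩
    · -- sum
      apply mul_left_cancel₀ hne
      have h1 : g * A i0 i0 * ∑ i, v i * w i = ∑ i, (g * v i) * (A i0 i0 * w i) := by
        rw [Finset.mul_sum]; apply Finset.sum_congr rfl; intro i _; ring
      rw [h1]
      have h2 : ∑ i, (g * v i) * (A i0 i0 * w i) = g * ∑ i, A i0 i * A i i0 := by
        rw [Finset.mul_sum]; apply Finset.sum_congr rfl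
        intro i _
        rw [hv i, hw i]; ring
      rw [h2, hcol i0 i0]
      ring
    · -- gcd = 1
      exact Finset.gcd_div_eq_one (f := fun i => A i i0) (Finset.mem_univ i0) (hApos i0 i0).ne'
    · ext i j
      simp only [Matrix.vecMulVec_apply]
      exact hentry i j
end

section
/- Let p_n denote the number of generalized partitions of n (pairs of equal-length positive integer tuples (v, w) with Σ v_i w_i = n and v_1 w_1 ≥ v_2 w_2 ≥ ⋯ ≥ v_k w_k), and q_n the number of such with gcd(v_1,…,v_k) = 1 (gcd = v_1 when k = 1). Then p_n = Σ_{r | n} q_r and q_n = Σ_{r | n} μ(r) p_{n/r} for all n ≥ 1. -/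
/-- A generalized partition of `n`: a pair of equal-length tuples `(v, w)` of positive
integers (of some length `k ≥ 1`) with `∑ i, v i * w i = n` and weakly decreasing products
`v 1 * w 1 ≥ v 2 * w 2 ≥ ⋯ ≥ v k * w k`. -/
def GenPart (n : ℕ) : Set (Σ k : ℕ, (Fin k → ℕ) × (Fin k → ℕ)) :=
  {p | 0 < p.1 ∧ (∀ i, 0 < p.2.1 i) ∧ (∀ i, 0 < p.2.2 i) ∧ (∑ i, p.2.1 i * p.2.2 i = n) ∧
    Antitone fun i => p.2.1 i * p.2.2 i}

/-- The number of generalized partitions of `n`. -/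
noncomputable def genPartCount (n : ℕ) : ℕ := Nat.card (GenPart n)

/-- The number of generalized partitions of `n` whose first tuple has gcd `1`. -/
noncomputable def genPartGcdOneCount (n : ℕ) : ℕ :=
  Nat.card {p ∈ GenPart n | Finset.univ.gcd p.2.1 = 1}

lemma genPart_term_le {n : ℕ} {p : Σ k : ℕ, (Fin k → ℕ) × (Fin k → ℕ)}
    (hp : p ∈ GenPart n) (i : Fin p.1) : p.2.1 i * p.2.2 i ≤ n := by
  obtain ⟨hk, hv, hw, hs, _⟩ := hp
  calc p.2.1 i * p.2.2 i ≤ ∑ j, p.2.1 j * p.2.2 j :=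
        Finset.single_le_sum (f := fun j => p.2.1 j * p.2.2 j)
          (fun j _ => Nat.zero_le _) (Finset.mem_univ i)
    _ = n := hs

lemma genPart_len_le {n : ℕ} {p : Σ k : ℕ, (Fin k → ℕ) × (Fin k → ℕ)}
    (hp : p ∈ GenPart n) : p.1 ≤ n := by
  obtain ⟨hk, hv, hw, hs, _⟩ := hp
  calc p.1 = ∑ _i : Fin p.1, 1 := by simp
    _ ≤ ∑ i, p.2.1 i * p.2.2 i :=
        Finset.sum_le_sum fun i _ => Nat.one_le_iff_ne_zero.mpr
          (Nat.mul_pos (hv i) (hw i)).ne'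
    _ = n := hs

lemma genPart_finite (n : ℕ) : (GenPart n).Finite := by
  classical
  set F : (Σ k : ℕ, (Fin k → ℕ) × (Fin k → ℕ)) → (Fin n → ℕ × ℕ) :=
    fun p i => if h : (i : ℕ) < p.1 then (p.2.1 ⟨i, h⟩, p.2.2 ⟨i, h⟩) else (0, 0) with hF
  have hinj : Set.InjOn F (GenPart n) := by
    intro p hp q hq heq
    have hkp := genPart_len_le hp
    have hkq := genPart_len_le hq
    have hk : p.1 = q.1 := by
      by_contra hne
      rcases Nat.lt_or_ge p.1 q.1 with h | h
      · have hi : (p.1 : ℕ) < n := lt_of_lt_of_le h hkq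
        have h0 := congrFun heq ⟨p.1, hi⟩
        simp only [hF, dif_neg (lt_irrefl p.1), dif_pos h] at h0
        exact (hq.2.1 ⟨p.1, h⟩).ne' (congrArg Prod.fst h0).symm
      · have hlt : q.1 < p.1 := lt_of_le_of_ne h fun e => hne e.symm
        have hi : (q.1 : ℕ) < n := lt_of_lt_of_le hlt hkp
        have h0 := congrFun heq ⟨q.1, hi⟩
        simp only [hF, dif_pos hlt, dif_neg (lt_irrefl q.1)] at h0
        exact (hp.2.1 ⟨q.1, hlt⟩).ne' (congrArg Prod.fst h0)
    obtain ⟨k, v, w⟩ := p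
    obtain ⟨k', v', w'⟩ := q
    dsimp at hk
    subst hk
    have hvw : ∀ i : Fin k, v i = v' i ∧ w i = w' i := by
      intro i
      have hi : (i : ℕ) < n := lt_of_lt_of_le i.2 hkp
      have := congrFun heq ⟨i, hi⟩
      simp only [hF, dif_pos i.2] at this
      exact ⟨congrArg Prod.fst this, congrArg Prod.snd this⟩
    have hv : v = v' := funext fun i => (hvw i).1
    have hw : w = w' := funext fun i => (hvw i).2
    rw [hv, hw]
  apply Set.Finite.of_finite_image _ hinj
  apply Set.Finite.subset (Set.Finite.pi fun _ : Fin n =>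
    (Set.finite_Iic n).prod (Set.finite_Iic n))
  rintro _ ⟨p, hp, rfl⟩
  intro i _
  simp only [hF]
  by_cases h : (i : ℕ) < p.1
  · rw [dif_pos h]
    constructor
    · exact le_trans (Nat.le_mul_of_pos_right _ (hp.2.2.1 ⟨i, h⟩)) (genPart_term_le hp ⟨i, h⟩)
    · exact le_trans (Nat.le_mul_of_pos_left _ (hp.2.1 ⟨i, h⟩)) (genPart_term_le hp ⟨i, h⟩)
  · rw [dif_neg h]; exact ⟨Nat.zero_le n, Nat.zero_le n⟩

lemma genPart_gcd_dvd {n : ℕ} {p : Σ k : ℕ, (Fin k → ℕ) × (Fin k → ℕ)}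
    (hp : p ∈ GenPart n) : Finset.univ.gcd p.2.1 ∣ n := by
  obtain ⟨hk, hv, hw, hs, _⟩ := hp
  rw [← hs]
  exact Finset.dvd_sum fun i _ =>
    Dvd.dvd.mul_right (Finset.gcd_dvd (Finset.mem_univ i)) _

lemma card_gcd_fiber {n d : ℕ} (hd : d ∣ n) (hd0 : 0 < d) :
    Nat.card {p ∈ GenPart n | Finset.univ.gcd p.2.1 = d} = genPartGcdOneCount (n / d) := by
  classical
  rw [genPartGcdOneCount]
  symm
  set Φ : (Σ k : ℕ, (Fin k → ℕ) × (Fin k → ℕ)) → (Σ k : ℕ, (Fin k → ℕ) × (Fin k → ℕ)) :=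
    fun p => ⟨p.1, fun i => d * p.2.1 i, p.2.2⟩ with hΦ
  have hbij : Set.BijOn Φ {p ∈ GenPart (n / d) | Finset.univ.gcd p.2.1 = 1}
      {p ∈ GenPart n | Finset.univ.gcd p.2.1 = d} := by
    refine ⟨?_, ?_, ?_⟩
    · rintro ⟨k, u, w⟩ ⟨⟨hk, hu, hw, hs, ha⟩, hg⟩
      refine ⟨⟨hk, fun i => Nat.mul_pos hd0 (hu i), hw, ?_, ?_⟩, ?_⟩
      · simp only [Φ]
        calc ∑ i : Fin k, d * u i * w i = d * ∑ i, u i * w i := by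
              rw [Finset.mul_sum]; exact Finset.sum_congr rfl fun i _ => (mul_assoc _ _ _)
          _ = n := by rw [hs]; exact Nat.mul_div_cancel' hd
      · intro i j hij
        simp only [Φ, mul_assoc]
        exact Nat.mul_le_mul_left d (ha hij)
      · simp only [Φ]
        rw [Finset.gcd_mul_left]
        simp only [hg]
        simp
    · rintro ⟨k, u, w⟩ _ ⟨k', u', w'⟩ _ heq
      simp only [hΦ, Sigma.mk.inj_iff] at heq
      obtain ⟨hk, h2⟩ := heq
      subst hk
      rw [heq_eq_eq, Prod.mk.injEq] at h2
      obtain ⟨h3, h4⟩ := h2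
      have : u = u' := funext fun i =>
        Nat.eq_of_mul_eq_mul_left hd0 (congrFun h3 i)
      rw [this, h4]
    · rintro ⟨k, v, w⟩ ⟨⟨hk, hv, hw, hs, ha⟩, hg⟩
      have hdvd : ∀ i, d ∣ v i := fun i => hg ▸ Finset.gcd_dvd (Finset.mem_univ i)
      have key : d * ∑ i : Fin k, (v i / d) * w i = n := by
        rw [Finset.mul_sum]
        calc ∑ i : Fin k, d * (v i / d * w i) = ∑ i, v i * w i :=
              Finset.sum_congr rfl fun i _ => by
                rw [← mul_assoc, Nat.mul_div_cancel' (hdvd i)]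
          _ = n := hs
      refine ⟨⟨k, fun i => v i / d, w⟩, ⟨⟨hk, ?_, hw, ?_, ?_⟩, ?_⟩, ?_⟩
      · exact fun i => Nat.div_pos (Nat.le_of_dvd (hv i) (hdvd i)) hd0
      · show ∑ i : Fin k, (v i / d) * w i = n / d
        rw [← key, Nat.mul_div_cancel_left _ hd0]
      · intro i j hij
        have h1 : d * (v j / d * w j) ≤ d * (v i / d * w i) := by
          rw [← mul_assoc, ← mul_assoc, Nat.mul_div_cancel' (hdvd i),
            Nat.mul_div_cancel' (hdvd j)]
          exact ha hij
        exact Nat.le_of_mul_le_mul_left h1 hd0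
      · have : Finset.univ.gcd (fun i : Fin k => d * (v i / d)) = d := by
          have : (fun i : Fin k => d * (v i / d)) = v :=
            funext fun i => Nat.mul_div_cancel' (hdvd i)
          rw [this]; exact hg
        rw [Finset.gcd_mul_left] at this
        simp only [normalize_eq] at this
        exact Nat.eq_of_mul_eq_mul_left hd0 (this.trans (mul_one d).symm)
      · simp only [hΦ, Sigma.mk.inj_iff, heq_eq_eq, Prod.mk.injEq, true_and, and_true]
        exact funext fun i => Nat.mul_div_cancel' (hdvd i)
  exact Nat.card_congr (hbij.equiv Φ)

lemma genPartCount_eq_sum (n : ℕ) (hn : 0 < n) :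
    genPartCount n = ∑ r ∈ n.divisors, genPartGcdOneCount r := by
  classical
  have hfin := genPart_finite n
  have h1 : genPartCount n = hfin.toFinset.card := by
    rw [genPartCount, Nat.card_eq_card_finite_toFinset hfin]
  have h2 : hfin.toFinset.card =
      ∑ d ∈ n.divisors, (hfin.toFinset.filter fun p => Finset.univ.gcd p.2.1 = d).card := by
    apply Finset.card_eq_sum_card_fiberwise
    intro p hp
    rw [Finset.mem_coe, Set.Finite.mem_toFinset] at hp
    rw [Finset.mem_coe, Nat.mem_divisors]
    exact ⟨genPart_gcd_dvd hp, hn.ne'⟩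
  have h3 : ∀ d ∈ n.divisors,
      (hfin.toFinset.filter fun p => Finset.univ.gcd p.2.1 = d).card =
        genPartGcdOneCount (n / d) := by
    intro d hd
    rw [Nat.mem_divisors] at hd
    have hd0 : 0 < d := Nat.pos_of_dvd_of_pos hd.1 hn
    rw [← card_gcd_fiber hd.1 hd0]
    have hset : {p ∈ GenPart n | Finset.univ.gcd p.2.1 = d} =
        ↑(hfin.toFinset.filter fun p => Finset.univ.gcd p.2.1 = d) := by
      ext p
      simp [Set.Finite.mem_toFinset, Set.mem_sep_iff]
    rw [hset, Nat.card_coe_set_eq, Set.ncard_coe_finset]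
  rw [h1, h2, Finset.sum_congr rfl h3, Nat.sum_div_divisors n genPartGcdOneCount]

open ArithmeticFunction in
/-- `p n = ∑_{r ∣ n} q r` and `q n = ∑_{r ∣ n} μ(r) p (n / r)` for `n ≥ 1`. -/
theorem genPart_counts (n : ℕ) (hn : 1 ≤ n) :
    genPartCount n = ∑ r ∈ n.divisors, genPartGcdOneCount r ∧
      (genPartGcdOneCount n : ℤ) =
        ∑ r ∈ n.divisors, moebius r * (genPartCount (n / r) : ℤ) := by
  refine ⟨genPartCount_eq_sum n hn, ?_⟩
  have key := (sum_eq_iff_sum_smul_moebius_eq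
      (f := fun m => (genPartGcdOneCount m : ℤ))
      (g := fun m => (genPartCount m : ℤ))).mp ?_ n hn
  · rw [← key, Nat.sum_divisorsAntidiagonal
      (f := fun x y => (moebius x : ℤ) • (genPartCount y : ℤ))]
    simp [zsmul_eq_mul]
  · intro m hm
    rw [genPartCount_eq_sum m hm]
    exact (Nat.cast_sum _ _).symm
end
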